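/- Let p < q < r be odd primes and write Φ_{pq}(x) = Σ_m d_m x^m (with d_m = 0 for m outside [0, φ(pq)]). Then for every integer i, Σ_{m} d_m χ_{mr}(i) = 0, where the sum is over all m with 0 ≤ m ≤ φ(pq). -/

import Mathlib

/-- The map `χ_n : ℤ → {0, ±1}` from the paper (depending on `p` and `q`).
Here `x % (p*q)` plays the role of `x̄`, the representative of `x` modulo `pq`
lying in `[0, pq − 1]`. -/
def chi (p q : ℕ) (n i : ℤ) : ℤ :=
  if ((i + 1) % (p * q) ≤ (n + p + q) % (p * q) ∧ (n + q) % (p * q) < (i + 1) % (p * q)) ∨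
     ((i + 1) % (p * q) ≤ (n + p + q) % (p * q) ∧ (n + p + q) % (p * q) < (n + q) % (p * q)) ∨
     ((n + p + q) % (p * q) < (n + q) % (p * q) ∧ (n + q) % (p * q) < (i + 1) % (p * q))
  then 1
  else if ((i + 1) % (p * q) ≤ (n + p) % (p * q) ∧ n % (p * q) < (i + 1) % (p * q)) ∨
     ((i + 1) % (p * q) ≤ (n + p) % (p * q) ∧ (n + p) % (p * q) < n % (p * q)) ∨
     ((n + p) % (p * q) < n % (p * q) ∧ n % (p * q) < (i + 1) % (p * q))
  then -1
  else 0

open Polynomial Finset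

private lemma emod_reduce {M : ℤ} (hM : 0 < M) {y : ℤ} (h0 : 0 ≤ y) (h2 : y < 2 * M) :
    y % M = y ∨ y % M = y - M := by
  rcases lt_or_ge y M with h | h
  · exact Or.inl (Int.emod_eq_of_lt h0 h)
  · right
    have h1 : y % M = (y - M) % M := by
      conv_lhs => rw [show y = y - M + M * 1 by ring]
      rw [Int.add_mul_emod_self_left]
    rw [h1, Int.emod_eq_of_lt (by omega) (by omega)]

private lemma emod_reduce' {M : ℤ} (hM : 0 < M) {y : ℤ} (h0 : -M ≤ y) (h2 : y < M) :
    y % M = y ∨ y % M = y + M := by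
  rcases le_or_gt 0 y with h | h
  · exact Or.inl (Int.emod_eq_of_lt h h2)
  · right
    have h1 : y % M = (y + M) % M := by
      conv_lhs => rw [show y = y + M + M * (-1) by ring]
      rw [Int.add_mul_emod_self_left]
    rw [h1, Int.emod_eq_of_lt (by omega) (by omega)]

private lemma cyc_iff {M : ℤ} (hM : 0 < M) {P : ℤ} (hp0 : 0 < P) (hpM : P < M) (n j : ℤ) :
    ((j % M ≤ (n + P) % M ∧ n % M < j % M) ∨
      (j % M ≤ (n + P) % M ∧ (n + P) % M < n % M) ∨
      ((n + P) % M < n % M ∧ n % M < j % M)) ↔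
      (1 ≤ (j - n) % M ∧ (j - n) % M ≤ P) := by
  have hMne : M ≠ 0 := by omega
  have hA0 : 0 ≤ n % M := Int.emod_nonneg n hMne
  have hA1 : n % M < M := Int.emod_lt_of_pos n hM
  have hJ0 : 0 ≤ j % M := Int.emod_nonneg j hMne
  have hJ1 : j % M < M := Int.emod_lt_of_pos j hM
  have hB : (n + P) % M = (n % M + P) % M := by
    rw [Int.add_emod, Int.emod_eq_of_lt hp0.le hpM]
  have hD : (j - n) % M = (j % M - n % M) % M := Int.sub_emod j n M
  rw [hB, hD]
  have h1 := emod_reduce hM (show (0:ℤ) ≤ n % M + P by omega) (by omega)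
  have h2 := emod_reduce' hM (show -M ≤ j % M - n % M by omega) (by omega)
  have h3 : 0 ≤ (n % M + P) % M := Int.emod_nonneg _ hMne
  have h4 : (n % M + P) % M < M := Int.emod_lt_of_pos _ hM
  have h5 : 0 ≤ (j % M - n % M) % M := Int.emod_nonneg _ hMne
  have h6 : (j % M - n % M) % M < M := Int.emod_lt_of_pos _ hM
  omega

private lemma not_both {M P Q : ℤ} (hM : 0 < M) (hp0 : 0 < P) (hPQ : P < Q) (hQM : P + Q < M)
    (x : ℤ) : ¬((1 ≤ (x - Q) % M ∧ (x - Q) % M ≤ P) ∧ (1 ≤ x % M ∧ x % M ≤ P)) := by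
  rintro ⟨⟨h1, h2⟩, h3, h4⟩
  have hMne : M ≠ 0 := by omega
  have hx : x % M = ((x - Q) % M + Q) % M := by
    conv_lhs => rw [show x = x - Q + Q by ring]
    rw [Int.add_emod, Int.emod_eq_of_lt (show (0:ℤ) ≤ Q by omega) (show Q < M by omega)]
  rw [Int.emod_eq_of_lt (show (0:ℤ) ≤ (x - Q) % M + Q by omega)
    (show (x - Q) % M + Q < M by omega)] at hx
  omega

private lemma chi_eq {p q : ℕ} (hp2 : 2 ≤ p) (hq : p < q) (n i : ℤ) :
    chi p q n i =
      (if 1 ≤ (i + 1 - n - q) % ((p:ℤ) * q) ∧ (i + 1 - n - q) % ((p:ℤ) * q) ≤ p then 1 else 0) -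
      (if 1 ≤ (i + 1 - n) % ((p:ℤ) * q) ∧ (i + 1 - n) % ((p:ℤ) * q) ≤ p then 1 else 0) := by
  have hq3 : 3 ≤ q := by omega
  have hp2' : (2:ℤ) ≤ (p:ℤ) := by exact_mod_cast hp2
  have hq3' : (3:ℤ) ≤ (q:ℤ) := by exact_mod_cast hq3
  have hpq' : (p:ℤ) < (q:ℤ) := by exact_mod_cast hq
  have hM : (0:ℤ) < (p:ℤ) * q := by positivity
  have hp0 : (0:ℤ) < (p:ℤ) := by omega
  have hpM : (p:ℤ) < (p:ℤ) * q := by nlinarith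
  have hpqM : (p:ℤ) + q < (p:ℤ) * q := by nlinarith
  have h1 := cyc_iff hM hp0 hpM (n + q) (i + 1)
  rw [show i + 1 - (n + (q:ℤ)) = i + 1 - n - q by ring] at h1
  have h2 := cyc_iff hM hp0 hpM n (i + 1)
  have hd := not_both hM hp0 hpq' hpqM (i + 1 - n)
  rw [chi, show n + (p:ℤ) + q = n + q + p by ring]
  simp only [h1, h2]
  by_cases d1 : 1 ≤ (i + 1 - n - q) % ((p:ℤ) * q) ∧ (i + 1 - n - q) % ((p:ℤ) * q) ≤ p
  · by_cases d2 : 1 ≤ (i + 1 - n) % ((p:ℤ) * q) ∧ (i + 1 - n) % ((p:ℤ) * q) ≤ p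
    · exact absurd ⟨d1, d2⟩ hd
    · simp [d1, d2]
  · by_cases d2 : 1 ≤ (i + 1 - n) % ((p:ℤ) * q) ∧ (i + 1 - n) % ((p:ℤ) * q) ≤ p
    · simp [d1, d2]
    · simp [d1, d2]

private lemma aeval_single_apply {M : ℕ} (s : ZMod M) (P : Polynomial ℤ) (N : ℕ)
    (hN : P.natDegree < N) (e : ZMod M) :
    (Polynomial.aeval (AddMonoidAlgebra.single s (1:ℤ)) P : AddMonoidAlgebra ℤ (ZMod M)).coeff e =
      ∑ m ∈ Finset.range N, P.coeff m * (if (m • s : ZMod M) = e then 1 else 0) := by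
  conv_lhs => rw [P.as_sum_range' N hN]
  rw [map_sum, AddMonoidAlgebra.coeff_sum, Finsupp.finset_sum_apply]
  refine Finset.sum_congr rfl fun m _ => ?_
  rw [← Polynomial.C_mul_X_pow_eq_monomial, map_mul, map_pow, Polynomial.aeval_X,
    Polynomial.aeval_C, AddMonoidAlgebra.single_pow, one_pow]
  have halg : (algebraMap ℤ (AddMonoidAlgebra ℤ (ZMod M))) (P.coeff m) =
      AddMonoidAlgebra.single (0 : ZMod M) (P.coeff m) :=
    (eq_intCast _ _).trans
      (eq_intCast (AddMonoidAlgebra.singleZeroRingHom : ℤ →+* AddMonoidAlgebra ℤ (ZMod M)) _).symm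
  rw [halg, AddMonoidAlgebra.single_mul_single, zero_add, mul_one, AddMonoidAlgebra.coeff_single, Finsupp.single_apply]
  simp only [mul_ite, mul_one, mul_zero]

private lemma poly_id (p q r : ℕ) (hp : p.Prime) (hq : q.Prime) (hr : r.Prime)
    (hpq : p < q) (hqr : q < r) :
    Polynomial.expand ℤ r (cyclotomic (p*q) ℤ) *
        (((X:Polynomial ℤ)^q - 1) * ∑ k ∈ Finset.Icc 1 p, (X:Polynomial ℤ)^k)
      = (cyclotomic (p*q*r) ℤ * X) * ((X:Polynomial ℤ)^(p*q) - 1) := by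
  haveI : Fact p.Prime := ⟨hp⟩
  haveI : Fact q.Prime := ⟨hq⟩
  have hrdvd : ¬ r ∣ p * q := by
    rw [hr.dvd_mul]
    rintro (h | h)
    · exact absurd (Nat.le_of_dvd hp.pos h) (by omega)
    · exact absurd (Nat.le_of_dvd hq.pos h) (by omega)
  have e1 := cyclotomic_expand_eq_cyclotomic_mul hr hrdvd ℤ
  have e2 : (∑ k ∈ Finset.Icc 1 p, (X:Polynomial ℤ)^k) = X * cyclotomic p ℤ := by
    rw [cyclotomic_prime, Finset.mul_sum]
    have himg : Finset.Icc 1 p = Finset.image (· + 1) (Finset.range p) := by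
      ext x
      simp only [Finset.mem_Icc, Finset.mem_image, Finset.mem_range]
      constructor
      · rintro ⟨h1, h2⟩; exact ⟨x - 1, by omega, by omega⟩
      · rintro ⟨y, h1, rfl⟩; omega
    rw [himg, Finset.sum_image (fun a _ b _ h => by omega)]
    exact Finset.sum_congr rfl fun k _ => by rw [pow_succ, mul_comm]
  have e3 : (X:Polynomial ℤ)^q - 1 = cyclotomic q ℤ * cyclotomic 1 ℤ := by
    rw [cyclotomic_one, cyclotomic_prime]
    exact (geom_sum_mul X q).symm
  have e4 : cyclotomic 1 ℤ * cyclotomic p ℤ * (cyclotomic q ℤ * cyclotomic (p*q) ℤ)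
      = (X:Polynomial ℤ)^(p*q) - 1 := by
    have h1 : ¬ p ∣ 1 := fun h =>
      absurd (Nat.le_of_dvd one_pos h) (by have := hp.two_le; omega)
    have h2 : ¬ p ∣ q := fun h => absurd ((Nat.prime_dvd_prime_iff_eq hp hq).mp h) (by omega)
    have a1 := cyclotomic_expand_eq_cyclotomic_mul hp h1 ℤ
    have a2 := cyclotomic_expand_eq_cyclotomic_mul hp h2 ℤ
    rw [one_mul] at a1
    have key : Polynomial.expand ℤ p ((X:Polynomial ℤ)^q - 1) = (X:Polynomial ℤ)^(p*q) - 1 := by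
      rw [map_sub, map_one, map_pow, Polynomial.expand_X, ← pow_mul, mul_comm p q]
    rw [← key, e3, map_mul, a1, a2, cyclotomic_one, mul_comm q p]
    ring
  rw [e1, e2, e3, ← e4]
  ring

/-- For odd primes `p < q < r`, writing `Φ_{pq} = Σ d_m x^m`, for every integer `i`
one has `Σ_{0 ≤ m ≤ φ(pq)} d_m χ_{mr}(i) = 0`. -/
theorem sum_chi_eq_zero (p q r : ℕ) (hp : p.Prime) (hq : q.Prime) (hr : r.Prime)
    (hop : Odd p) (hoq : Odd q) (hor : Odd r) (hpq : p < q) (hqr : q < r) (i : ℤ) :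
    ∑ m ∈ Finset.range (Nat.totient (p * q) + 1),
      (Polynomial.cyclotomic (p * q) ℤ).coeff m * chi p q ((m : ℤ) * r) i = 0 := by
  classical
  have hp2 := hp.two_le
  have hp3 : 3 ≤ p := by have := Nat.odd_iff.mp hop; omega
  have hq4 : 4 ≤ q := by omega
  have hM0 : 0 < p * q := by positivity
  have hMz : (0:ℤ) < ((p*q : ℕ):ℤ) := by exact_mod_cast hM0
  have hcast : ((p*q : ℕ):ℤ) = (p:ℤ) * q := by push_cast; ring
  have hMz' : (0:ℤ) < (p:ℤ) * q := hcast ▸ hMz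
  have hpMn : p < p * q := by nlinarith
  have hbridge : ∀ (t : ℤ) (k : ℕ), 1 ≤ k → k ≤ p →
      (((t : ZMod (p*q)) = ((k : ℕ) : ZMod (p*q))) ↔ t % ((p:ℤ) * q) = (k:ℤ)) := by
    intro t k hk1 hk2
    rw [show ((k:ℕ) : ZMod (p*q)) = (((k:ℤ)) : ZMod (p*q)) by push_cast; rfl,
      ZMod.intCast_eq_intCast_iff', hcast,
      Int.emod_eq_of_lt (show (0:ℤ) ≤ (k:ℤ) by positivity)
        (show (k:ℤ) < (p:ℤ)*q by rw [← hcast]; exact_mod_cast lt_of_le_of_lt hk2 hpMn)]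
  have hGexp : ∀ t : ℤ,
      (if 1 ≤ t % ((p:ℤ) * q) ∧ t % ((p:ℤ) * q) ≤ (p:ℤ) then (1:ℤ) else 0) =
        ∑ k ∈ Finset.Icc 1 p,
          (if ((t : ZMod (p*q)) = ((k : ℕ) : ZMod (p*q))) then (1:ℤ) else 0) := by
    intro t
    have h0 : 0 ≤ t % ((p:ℤ)*q) := Int.emod_nonneg _ hMz'.ne'
    have h1 : t % ((p:ℤ)*q) < (p:ℤ)*q := Int.emod_lt_of_pos _ hMz'
    have hpz : (p:ℤ) < (p:ℤ)*q := by rw [← hcast]; exact_mod_cast hpMn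
    calc (if 1 ≤ t % ((p:ℤ) * q) ∧ t % ((p:ℤ) * q) ≤ (p:ℤ) then (1:ℤ) else 0)
        = ∑ k ∈ Finset.Icc 1 p, (if (t % ((p:ℤ)*q)).toNat = k then (1:ℤ) else 0) := by
          rw [Finset.sum_ite_eq]
          refine (if_congr ?_ rfl rfl)
          rw [Finset.mem_Icc]
          omega
      _ = _ := Finset.sum_congr rfl fun k hk => by
          rw [Finset.mem_Icc] at hk
          refine (if_congr ?_ rfl rfl)
          rw [hbridge t k hk.1 hk.2]
          omega
  have step1 : ∀ m ∈ Finset.range (Nat.totient (p * q) + 1),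
      (Polynomial.cyclotomic (p * q) ℤ).coeff m * chi p q ((m : ℤ) * r) i =
      ∑ k ∈ Finset.Icc 1 p,
        ((cyclotomic (p*q) ℤ).coeff m *
            (if (((i + 1 - ((m:ℤ)*r) - q : ℤ)) : ZMod (p*q)) = ((k:ℕ) : ZMod (p*q)) then (1:ℤ) else 0) -
         (cyclotomic (p*q) ℤ).coeff m *
            (if (((i + 1 - ((m:ℤ)*r) : ℤ)) : ZMod (p*q)) = ((k:ℕ) : ZMod (p*q)) then (1:ℤ) else 0)) := by
    intro m _
    rw [chi_eq hp2 hpq ((m:ℤ)*r) i, hGexp, hGexp, mul_sub, Finset.mul_sum, Finset.mul_sum,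
      ← Finset.sum_sub_distrib]
  rw [Finset.sum_congr rfl step1, Finset.sum_comm]
  set U : AddMonoidAlgebra ℤ (ZMod (p*q)) :=
    Polynomial.aeval (AddMonoidAlgebra.single ((r:ℕ) : ZMod (p*q)) (1:ℤ))
      (cyclotomic (p*q) ℤ) with hUdef
  set W : AddMonoidAlgebra ℤ (ZMod (p*q)) :=
    ∑ k ∈ Finset.Icc 1 p,
      (AddMonoidAlgebra.single (((q + k : ℕ)) : ZMod (p*q)) (1:ℤ) -
       AddMonoidAlgebra.single (((k : ℕ)) : ZMod (p*q)) (1:ℤ)) with hWdef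
  have hUcoeff : ∀ e : ZMod (p*q),
      U.coeff e = ∑ m ∈ Finset.range (Nat.totient (p * q) + 1),
          (cyclotomic (p*q) ℤ).coeff m *
            (if ((((m:ℤ) * r : ℤ)) : ZMod (p*q)) = e then (1:ℤ) else 0) := by
    intro e
    rw [hUdef, aeval_single_apply _ _ (Nat.totient (p * q) + 1) (by rw [natDegree_cyclotomic]; omega) e]
    refine Finset.sum_congr rfl fun m _ => ?_
    congr 1
    refine if_congr ?_ rfl rfl
    rw [show ((((m:ℤ) * r : ℤ)) : ZMod (p*q)) = m • ((r:ℕ) : ZMod (p*q)) by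
      push_cast [nsmul_eq_mul]; ring]
  have step2 : ∀ k ∈ Finset.Icc 1 p,
      (∑ m ∈ Finset.range (Nat.totient (p * q) + 1),
        ((cyclotomic (p*q) ℤ).coeff m *
            (if (((i + 1 - ((m:ℤ)*r) - q : ℤ)) : ZMod (p*q)) = ((k:ℕ) : ZMod (p*q)) then (1:ℤ) else 0) -
         (cyclotomic (p*q) ℤ).coeff m *
            (if (((i + 1 - ((m:ℤ)*r) : ℤ)) : ZMod (p*q)) = ((k:ℕ) : ZMod (p*q)) then (1:ℤ) else 0))) =
      U.coeff (((i + 1 - q - k : ℤ)) : ZMod (p*q)) - U.coeff (((i + 1 - k : ℤ)) : ZMod (p*q)) := by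
    intro k _
    rw [Finset.sum_sub_distrib, hUcoeff, hUcoeff]
    congr 1
    · refine Finset.sum_congr rfl fun m _ => ?_
      congr 1
      refine if_congr ?_ rfl rfl
      constructor <;> intro h
      · push_cast at h ⊢; linear_combination -h
      · push_cast at h ⊢; linear_combination -h
    · refine Finset.sum_congr rfl fun m _ => ?_
      congr 1
      refine if_congr ?_ rfl rfl
      constructor <;> intro h
      · push_cast at h ⊢; linear_combination -h
      · push_cast at h ⊢; linear_combination -h
  rw [Finset.sum_congr rfl step2]
  have step3 : (∑ k ∈ Finset.Icc 1 p,
      (U.coeff (((i + 1 - q - k : ℤ)) : ZMod (p*q)) - U.coeff (((i + 1 - k : ℤ)) : ZMod (p*q))))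
      = (U * W).coeff (((i + 1 : ℤ)) : ZMod (p*q)) := by
    rw [hWdef, Finset.mul_sum, AddMonoidAlgebra.coeff_sum, Finsupp.finset_sum_apply]
    refine Finset.sum_congr rfl fun k _ => ?_
    rw [mul_sub, AddMonoidAlgebra.coeff_sub, Finsupp.sub_apply, AddMonoidAlgebra.coeff_mul_single_apply,
      AddMonoidAlgebra.coeff_mul_single_apply, mul_one, mul_one]
    congr 2
    · push_cast; ring
    · push_cast; ring
  have hU' : U = Polynomial.aeval (AddMonoidAlgebra.single (1 : ZMod (p*q)) (1:ℤ))
      (Polynomial.expand ℤ r (cyclotomic (p*q) ℤ)) := by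
    rw [hUdef, Polynomial.expand_aeval]
    simp only [AddMonoidAlgebra.single_pow, one_pow, nsmul_eq_mul, mul_one]
  have hW' : W = Polynomial.aeval (AddMonoidAlgebra.single (1 : ZMod (p*q)) (1:ℤ))
      ((((X:Polynomial ℤ)^q - 1) * ∑ k ∈ Finset.Icc 1 p, (X:Polynomial ℤ)^k)) := by
    have hexp : (((X:Polynomial ℤ)^q - 1) * ∑ k ∈ Finset.Icc 1 p, (X:Polynomial ℤ)^k)
        = ∑ k ∈ Finset.Icc 1 p, ((X:Polynomial ℤ)^(q+k) - (X:Polynomial ℤ)^k) := by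
      rw [Finset.mul_sum]
      exact Finset.sum_congr rfl fun k _ => by ring
    rw [hWdef, hexp, map_sum]
    refine Finset.sum_congr rfl fun k _ => ?_
    rw [map_sub, map_pow, map_pow, Polynomial.aeval_X]
    simp only [AddMonoidAlgebra.single_pow, one_pow, nsmul_eq_mul, mul_one]
  have hz : Polynomial.aeval (AddMonoidAlgebra.single (1 : ZMod (p*q)) (1:ℤ))
      ((X:Polynomial ℤ)^(p*q) - 1) = 0 := by
    rw [map_sub, map_one, map_pow, Polynomial.aeval_X]
    simp only [AddMonoidAlgebra.single_pow, one_pow, nsmul_eq_mul, mul_one]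
    rw [ZMod.natCast_self, AddMonoidAlgebra.one_def, sub_self]
  have step4 : U * W = 0 := by
    rw [hU', hW', ← map_mul, poly_id p q r hp hq hr hpq hqr, map_mul, hz, mul_zero]
  rw [step3, step4]
  simp
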